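/- arXiv:1110.4098 — 2 statements merged into one kernel-verified Lean document; each statement's English description precedes it below -/
import Mathlib

section
/- Let φ: A → L[τ] be a Drinfeld module of rank n. There exists a series u ∈ L̄((τ^{-1}))^× satisfying u^{-1}·φ(F_∞)·u ⊆ k̄((τ^{-1})), and any such u has all of its coefficients in the separable closure L^sep of L in L̄. -/
/-!
Axiomatic framework for the Sato–Tate setting of Drinfeld modules (D. Zywina,
"The Sato-Tate Law for Drinfeld Modules").

We fix a finite field `k` with `q` elements, a global function field `F` with field of
constants `k`, a place `∞` of `F` with completion `Finf` (valuation `ord_∞`, residue degree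
`dinf`), the ring `A ⊆ F` of functions regular away from `∞`, a field extension `L` of `k`
with algebraic closure `Lbar`, and the twisted Laurent series skew field `R = L̄((τ⁻¹))`
(with commutation rule `τ·a = a^q·τ`), which is axiomatized via its coefficient functionals.
A Drinfeld module of rank `n` is a ring homomorphism `φ : A → L[τ] ⊆ R`, together with its
canonical extension `phiinf : Finf → R` satisfying `ord_{τ⁻¹}(phiinf x) = n·dinf·ord_∞(x)`.
-/

noncomputable section
open scoped Classical

namespace SatoTate

/-- An additive `ℤ ∪ {+∞}`-valued valuation on a division ring; e.g. the normalized
valuation `ord_∞` on `F_∞`, or `ord_{τ⁻¹}` on `L̄((τ⁻¹))`. -/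
structure IsAddVal {K : Type*} [DivisionRing K] (v : K → WithTop ℤ) : Prop where
  top_iff : ∀ x, v x = ⊤ ↔ x = 0
  map_mul : ∀ x y, v (x * y) = v x + v y
  min_le : ∀ x y, min (v x) (v y) ≤ v (x + y)

/-- `v` is a (normalized) place of `F`, trivial on the field of constants `k`. -/
def IsPlaceOver (k : Type*) {F : Type*} [Field k] [Field F] [Algebra k F]
    (v : F → WithTop ℤ) : Prop :=
  IsAddVal v ∧ (∀ c : k, c ≠ 0 → v (algebraMap k F c) = 0) ∧ ∃ x, v x = 1

/-- `L` is a finitely generated field (equivalently, finitely generated over the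
prime field `k`). -/
def FinGenField (k L : Type*) [Field k] [Field L] [Algebra k L] : Prop :=
  ∃ s : Finset L, IntermediateField.adjoin k (s : Set L) = ⊤

/-- The ambient setting: `k`, `F`, `∞`, `Finf`, `A`, `L`, `L̄`, the twisted Laurent series
skew field `R = L̄((τ⁻¹))`, and a Drinfeld module `φ : A → L[τ]` of rank `n`. -/
structure Ctx (q n dinf : ℕ) (k F Finf L Lbar R : Type)
    [Field k] [Fintype k] [Field F] [Algebra k F]
    [Field Finf] [Algebra k Finf] [Algebra F Finf] [IsScalarTower k F Finf]
    [Field L] [Algebra k L]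
    [Field Lbar] [Algebra k Lbar] [Algebra L Lbar] [IsScalarTower k L Lbar]
    [DivisionRing R] : Type 1 where
  /-- `k` is the finite field with `q` elements. -/
  card_k : Fintype.card k = q
  one_lt_q : 1 < q
  n_pos : 0 < n
  dinf_pos : 0 < dinf
  /-- `L̄` is an algebraic closure of `L`. -/
  algClosure : IsAlgClosure L Lbar
  /-- `k` is the field of constants of `F`. -/
  constants : ∀ x : F, IsAlgebraic k x → x ∈ (algebraMap k F).range
  /-- `F` is a function field in one variable over `k`. -/
  function_field : ∃ t : F, Transcendental k t ∧
    FiniteDimensional (IntermediateField.adjoin k ({t} : Set F)) F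
  /-- The valuation `ord_∞` on the completion `Finf` of `F` at `∞`. -/
  vinf : Finf → WithTop ℤ
  vinf_val : IsAddVal vinf
  vinf_const : ∀ c : k, c ≠ 0 → vinf (algebraMap k Finf c) = 0
  vinf_one : ∃ x : Finf, vinf x = 1
  /-- restricted to `F`, `ord_∞` is a place of `F`. -/
  vinf_place : IsPlaceOver k fun y : F => vinf (algebraMap F Finf y)
  /-- `Finf` is complete. -/
  complete : ∀ s : ℕ → Finf,
    (∀ m : ℤ, ∃ N, ∀ i ≥ N, ∀ j ≥ N, (m : WithTop ℤ) ≤ vinf (s i - s j)) →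
    ∃ l, ∀ m : ℤ, ∃ N, ∀ i ≥ N, (m : WithTop ℤ) ≤ vinf (s i - l)
  /-- `F` is dense in `Finf`. -/
  dense : ∀ x : Finf, ∀ m : ℤ, ∃ y : F, (m : WithTop ℤ) ≤ vinf (x - algebraMap F Finf y)
  /-- The residue field `𝔽_∞` of `∞` has degree `dinf` over `k`: the valuation ring of
  `ord_∞` has exactly `q ^ (dinf * m)` distinct balls of radius `m`. -/
  residue : ∀ m : ℕ, 0 < m → Nat.card
    {s : Set Finf // ∃ x, 0 ≤ vinf x ∧ s = {y | 0 ≤ vinf y ∧ (m : WithTop ℤ) ≤ vinf (y - x)}}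
      = q ^ (dinf * m)
  /-- the inclusion of constants `L̄ → L̄((τ⁻¹))`. -/
  cst : Lbar →+* R
  /-- the twist `τ` (the `q`-power Frobenius). -/
  τ : R
  /-- the commutation rule `τ · a = a^q · τ`. -/
  τ_comm : ∀ a : Lbar, τ * cst a = cst (a ^ q) * τ
  /-- `coeff f i` is the coefficient of `τ⁻ⁱ` in `f = ∑ᵢ (coeff f i)·τ⁻ⁱ`. -/
  coeff : R → ℤ → Lbar
  coeff_add : ∀ f g i, coeff (f + g) i = coeff f i + coeff g i
  coeff_injective : ∀ f g : R, (∀ i, coeff f i = coeff g i) → f = g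
  coeff_bddBelow : ∀ f : R, ∃ N : ℤ, ∀ i < N, coeff f i = 0
  coeff_surjective : ∀ c : ℤ → Lbar, (∃ N : ℤ, ∀ i < N, c i = 0) →
    ∃ f : R, ∀ i, coeff f i = c i
  coeff_monomial : ∀ (a : Lbar) (m i : ℤ), coeff (cst a * τ ^ m) i = if i = -m then a else 0
  /-- the valuation `ord_{τ⁻¹}` on `R`. -/
  w : R → WithTop ℤ
  w_val : IsAddVal w
  w_coeff : ∀ (f : R) (i : ℤ), (i : WithTop ℤ) ≤ w f ↔ ∀ j < i, coeff f j = 0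
  /-- the coefficientwise action of `Gal(L̄/L)` on `R = L̄((τ⁻¹))`. -/
  galAct : (Lbar ≃ₐ[L] Lbar) → R →+* R
  galAct_coeff : ∀ (σ : Lbar ≃ₐ[L] Lbar) (f : R) (i : ℤ),
    coeff (galAct σ f) i = σ (coeff f i)
  /-- `A ⊆ F` is the ring of functions regular away from `∞`. -/
  A : Subring F
  A_spec : ∀ x : F, x ∈ A ↔ ∀ v : F → WithTop ℤ, IsPlaceOver k v →
    v ≠ (fun y : F => vinf (algebraMap F Finf y)) → 0 ≤ v x
  /-- the Drinfeld module `φ : A → L[τ] ⊆ L̄((τ⁻¹))`. -/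
  φ : ↥A →+* R
  /-- the coefficients of each `φ_a` lie in `L`. -/
  φ_coeff_L : ∀ (a : ↥A) (i : ℤ), coeff (φ a) i ∈ (algebraMap L Lbar).range
  /-- each `φ_a` is a twisted polynomial in `τ`. -/
  φ_poly : ∀ (a : ↥A) (i : ℤ), 0 < i → coeff (φ a) i = 0
  /-- `φ(A)` is not contained in the constants. -/
  φ_nonconst : ∃ (a : ↥A) (i : ℤ), i ≠ 0 ∧ coeff (φ a) i ≠ 0
  /-- the canonical extension of `φ` to `Finf`. -/
  phiinf : Finf →+* R
  phiinf_extends : ∀ a : ↥A, phiinf (algebraMap F Finf (a : F)) = φ a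
  /-- `φ` has rank `n`: `ord_{τ⁻¹}(φ_x) = n·dinf·ord_∞(x)`. -/
  rank : ∀ x : Finf, w (phiinf x) = (n * dinf) • vinf x
  /-- `cpoly f = det(T·1 − f)` is the reduced characteristic polynomial of `f ∈ D_φ`
  over `Finf`: the monic polynomial of degree `n` that is a power of the minimal
  polynomial of `f` over `Finf`. -/
  cpoly : R → Polynomial Finf
  cpoly_spec : ∀ f : R, (∀ a : ↥A, f * φ a = φ a * f) →
    (cpoly f).Monic ∧ (cpoly f).natDegree = n ∧
    (∑ i ∈ Finset.range (n + 1), phiinf ((cpoly f).coeff i) * f ^ i = 0) ∧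
    ∃ (g : Polynomial Finf) (m : ℕ), g.Monic ∧ Irreducible g ∧
      (∑ i ∈ Finset.range (g.natDegree + 1), phiinf (g.coeff i) * f ^ i = 0) ∧
      cpoly f = g ^ m

/-- The units of the centralizer of a subset `s ⊆ R`, as a subgroup of `Rˣ`. -/
def unitsCentralizer {R : Type*} [Ring R] (s : Set R) : Subgroup Rˣ where
  carrier := {y : Rˣ | (y : R) ∈ Subring.centralizer s}
  one_mem' := by
    show ((1 : Rˣ) : R) ∈ Subring.centralizer s
    rw [Units.val_one]; exact Subring.one_mem _
  mul_mem' := by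
    intro a b ha hb
    show ((a * b : Rˣ) : R) ∈ Subring.centralizer s
    rw [Units.val_mul]; exact Subring.mul_mem _ ha hb
  inv_mem' := by
    intro y hy
    rw [Set.mem_setOf_eq, Subring.mem_centralizer_iff] at hy ⊢
    intro g hg
    have h := hy g hg
    have h2 : (y : R) * (g * (↑y⁻¹ : R)) = g := by
      rw [← mul_assoc, ← h, mul_assoc, Units.mul_inv, mul_one]
    calc g * (↑y⁻¹ : R) = ↑y⁻¹ * ((y : R) * (g * ↑y⁻¹)) := by
          rw [← mul_assoc, Units.inv_mul, one_mul]
      _ = ↑y⁻¹ * g := by rw [h2]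

namespace Ctx

variable {q n dinf : ℕ} {k F Finf L Lbar R : Type}
  [Field k] [Fintype k] [Field F] [Algebra k F]
  [Field Finf] [Algebra k Finf] [Algebra F Finf] [IsScalarTower k F Finf]
  [Field L] [Algebra k L]
  [Field Lbar] [Algebra k Lbar] [Algebra L Lbar] [IsScalarTower k L Lbar]
  [DivisionRing R]

variable (C : Ctx q n dinf k F Finf L Lbar R)

/-- `D_φ`: the centralizer of `φ(A)` in `R = L̄((τ⁻¹))`; a central `Finf`-division
algebra with invariant `−1/n`. -/
def D : Subring R := Subring.centralizer (Set.range fun a : ↥C.A => C.φ a)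

/-- membership in the twisted polynomial ring `L[τ] ⊆ R`. -/
def MemLtau (f : R) : Prop :=
  (∀ i : ℤ, 0 < i → C.coeff f i = 0) ∧ ∀ i : ℤ, C.coeff f i ∈ (algebraMap L Lbar).range

/-- membership in the twisted polynomial ring `L̄[τ] ⊆ R`. -/
def MemLbartau (f : R) : Prop := ∀ i : ℤ, 0 < i → C.coeff f i = 0

/-- the endomorphism ring `End_L(φ)`: the centralizer of `φ(A)` in `L[τ]`. -/
def EndL : Set R := {f | C.MemLtau f ∧ ∀ a : ↥C.A, f * C.φ a = C.φ a * f}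

/-- the endomorphism ring `End_{L̄}(φ)`: the centralizer of `φ(A)` in `L̄[τ]`. -/
def EndLbar : Set R := {f | C.MemLbartau f ∧ ∀ a : ↥C.A, f * C.φ a = C.φ a * f}

/-- `B_φ`: the centralizer of `End_{L̄}(φ)` in `R = L̄((τ⁻¹))`. -/
def B : Subring R := Subring.centralizer C.EndLbar

/-- `σ ∈ Gal(L̄/L)` belongs to the Weil group `W_L` with `deg σ = d`: the restriction of
`σ` to the algebraic closure `k̄` of `k` in `L̄` is the `d`-th power of `x ↦ x^q`. -/
def WeilCond (_C : Ctx q n dinf k F Finf L Lbar R) (σ : Lbar ≃ₐ[L] Lbar) (d : ℤ) : Prop :=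
  ∀ x : Lbar, IsAlgebraic k x → σ x ^ q ^ (-d).toNat = x ^ q ^ d.toNat

/-- `u ∈ L̄((τ⁻¹))^×` has coefficients in `L^sep` and satisfies
`u⁻¹ · φ(A) · u ⊆ k̄((τ⁻¹))`. -/
def UGood (u : R) : Prop :=
  u ≠ 0 ∧ (∀ i : ℤ, C.coeff u i ∈ separableClosure L Lbar) ∧
    ∀ (a : ↥C.A) (i : ℤ), IsAlgebraic k (C.coeff (u⁻¹ * C.φ a * u) i)

/-- `u ∈ L̄((τ⁻¹))^×` satisfies `u⁻¹ · φ(Finf) · u ⊆ k̄((τ⁻¹))`. -/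
def UGoodInf (u : R) : Prop :=
  u ≠ 0 ∧ ∀ (x : Finf) (i : ℤ), IsAlgebraic k (C.coeff (u⁻¹ * C.phiinf x * u) i)

/-- the Sato–Tate representation: `ρ_∞(σ) = σ(u) · τ^{deg σ} · u⁻¹`. -/
def rho (σ : Lbar ≃ₐ[L] Lbar) (d : ℤ) (u : R) : R := C.galAct σ u * C.τ ^ d * u⁻¹

/-- the image `ρ_∞(W_L) ⊆ D_φ^×`, as a subset of `R`. -/
def rhoSet : Set R :=
  {r | ∃ (σ : Lbar ≃ₐ[L] Lbar) (d : ℤ) (u : R), C.WeilCond σ d ∧ C.UGood u ∧ r = C.rho σ d u}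

/-- `D_φ^×`, as a subgroup of `Rˣ`. -/
def DUnits : Subgroup Rˣ := unitsCentralizer (Set.range fun a : ↥C.A => C.φ a)

/-- `B_φ^×`, as a subgroup of `Rˣ`. -/
def BUnits : Subgroup Rˣ := unitsCentralizer C.EndLbar

/-- `H` contains a neighbourhood of `1` in `K` for the `∞`-adic (i.e. `ord_{τ⁻¹}`-adic)
topology; together with `H ≤ K` this says that `H` is an open subgroup of `K`. -/
def OpenIn (K H : Subgroup Rˣ) : Prop :=
  ∃ m : ℤ, ∀ y : Rˣ, y ∈ K → (m : WithTop ℤ) ≤ C.w ((y : R) - 1) → y ∈ H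

/-- `φ` has generic characteristic: `∂ ∘ φ : A → L` is injective. -/
def GenericChar : Prop := ∀ a : ↥C.A, C.coeff (C.φ a) 0 = 0 → a = 0

/-- `End_{L̄}(φ) = φ(A)`: no extra endomorphisms. -/
def NoExtraEnd : Prop := ∀ f ∈ C.EndLbar, ∃ a : ↥C.A, f = C.φ a

/-- the image of `End_L(φ) ⊗_A Finf` in `D_φ`. -/
def endSpan : Set R :=
  {f | ∃ (m : ℕ) (e : Fin m → R) (z : Fin m → Finf),
    (∀ i, e i ∈ C.EndL) ∧ f = ∑ i, e i * C.phiinf (z i)}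

/-- the reduced trace `tr : D_φ → Finf` (read off from the reduced characteristic
polynomial). -/
def Trd (f : R) : Finf := -((C.cpoly f).coeff (n - 1))

/-- the reduced norm `det : D_φ → Finf` (read off from the reduced characteristic
polynomial). -/
def Nrd (f : R) : Finf := (-1) ^ n * (C.cpoly f).coeff 0


/-! ### Auxiliary infrastructure -/

section AuxFrob

lemma aux_exists_frob (C : Ctx q n dinf k F Finf L Lbar R) : ∃ Φ : RingAut Lbar, ∀ x : Lbar, Φ x = x ^ q := by
  haveI : IsAlgClosed Lbar := C.algClosure.isAlgClosed
  set p := ringChar k with hp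
  haveI : CharP k p := ringChar.charP k
  haveI hfact : Fact p.Prime := ⟨CharP.char_is_prime k p⟩
  obtain ⟨e, hpe, hcard⟩ := FiniteField.card k p
  have hq : q = p ^ (e : ℕ) := by rw [← C.card_k, hcard]
  haveI : CharP Lbar p := charP_of_injective_algebraMap (algebraMap k Lbar).injective p
  refine ⟨(frobeniusEquiv Lbar p : RingAut Lbar) ^ (e : ℕ), fun x => ?_⟩
  rw [hq]
  induction (e : ℕ) generalizing x with
  | zero => simp only [pow_zero, pow_one]; rfl
  | succ i ih =>
      have h1 : ((frobeniusEquiv Lbar p : RingAut Lbar) ^ (i + 1)) x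
          = ((frobeniusEquiv Lbar p : RingAut Lbar) ^ i) (frobeniusEquiv Lbar p x) := by
        rw [pow_succ]; rfl
      rw [h1, frobeniusEquiv_apply, frobenius_def, ih, ← pow_mul, ← pow_succ']

lemma aux_frob_pow (Φ : RingAut Lbar) (hΦ : ∀ x : Lbar, Φ x = x ^ q) (s : ℕ) (x : Lbar) :
    (Φ ^ s) x = x ^ q ^ s := by
  induction s generalizing x with
  | zero => simp only [pow_zero, pow_one]; rfl
  | succ i ih =>
      have h1 : (Φ ^ (i + 1)) x = (Φ ^ i) (Φ x) := by rw [pow_succ]; rfl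
      rw [h1, hΦ, ih, ← pow_mul, ← pow_succ']

lemma aux_frob_zpow_nonneg (Φ : RingAut Lbar) (hΦ : ∀ x : Lbar, Φ x = x ^ q) {s : ℤ}
    (hs : 0 ≤ s) (x : Lbar) : (Φ ^ s) x = x ^ q ^ s.toNat := by
  have h1 : Φ ^ s = Φ ^ (s.toNat : ℤ) := by rw [Int.toNat_of_nonneg hs]
  rw [h1, zpow_natCast, aux_frob_pow Φ hΦ]

lemma aux_frob_cancel (Φ : RingAut Lbar) (s : ℤ) (x : Lbar) :
    (Φ ^ (-s)) ((Φ ^ s) x) = x := by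
  have h1 : Φ ^ (-s) * Φ ^ s = 1 := by rw [← zpow_add, neg_add_cancel, zpow_zero]
  have h2 : (Φ ^ (-s) * Φ ^ s) x = (Φ ^ (-s)) ((Φ ^ s) x) := rfl
  rw [← h2, h1]; rfl

end AuxFrob

section AuxCoeff

lemma aux_coeff_zero (i : ℤ) : C.coeff 0 i = 0 := by
  have h := C.coeff_add 0 0 i
  rw [add_zero] at h
  exact add_left_cancel (h.symm.trans (add_zero _).symm)

/-- coefficient extraction as an additive monoid hom -/
def coeffHom (i : ℤ) : R →+ Lbar :=
  AddMonoidHom.mk' (fun f => C.coeff f i) (fun a b => C.coeff_add a b i)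

lemma aux_coeff_sum {α : Type*} (s : Finset α) (F : α → R) (i : ℤ) :
    C.coeff (∑ a ∈ s, F a) i = ∑ a ∈ s, C.coeff (F a) i :=
  map_sum (C.coeffHom i) F s

lemma aux_coeff_sub (f g : R) (i : ℤ) : C.coeff (f - g) i = C.coeff f i - C.coeff g i :=
  map_sub (C.coeffHom i) f g

lemma aux_coeff_eq_zero_of_le {f : R} {N : ℤ} (h : (N : WithTop ℤ) ≤ C.w f) {j : ℤ}
    (hj : j < N) : C.coeff f j = 0 := (C.w_coeff f N).mp h j hj

lemma aux_le_w {f : R} {N : ℤ} (h : ∀ j < N, C.coeff f j = 0) : (N : WithTop ℤ) ≤ C.w f :=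
  (C.w_coeff f N).mpr h

lemma aux_w_one : C.w 1 = 0 := by
  have htop : C.w 1 ≠ ⊤ := fun h => (one_ne_zero : (1 : R) ≠ 0) ((C.w_val.top_iff 1).mp h)
  obtain ⟨a, ha⟩ := WithTop.ne_top_iff_exists.mp htop
  have h2 := C.w_val.map_mul 1 1
  rw [one_mul, ← ha, ← WithTop.coe_add, WithTop.coe_inj] at h2
  have : a = 0 := by omega
  rw [← ha, this]; rfl

lemma aux_mul_coeff_zero {x y : R} {N M : ℤ} (hx : ∀ j < N, C.coeff x j = 0)
    (hy : ∀ j < M, C.coeff y j = 0) {i : ℤ} (hi : i < N + M) : C.coeff (x * y) i = 0 := by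
  have h1 : ((N + M : ℤ) : WithTop ℤ) ≤ C.w (x * y) := by
    rw [C.w_val.map_mul, WithTop.coe_add]
    exact add_le_add (C.aux_le_w hx) (C.aux_le_w hy)
  exact C.aux_coeff_eq_zero_of_le h1 hi

lemma aux_coeff_tau_zpow (s i : ℤ) : C.coeff (C.τ ^ s) i = if i = -s then 1 else 0 := by
  have h := C.coeff_monomial 1 s i
  rwa [map_one, one_mul] at h

lemma aux_tau_ne : C.τ ≠ 0 := by
  intro h
  have h1 : C.coeff (C.τ ^ (1 : ℤ)) (-1) = 1 := by
    rw [C.aux_coeff_tau_zpow]; simp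
  rw [zpow_one, h, C.aux_coeff_zero] at h1
  exact one_ne_zero h1.symm

lemma aux_tau_pow_cst (Φ : RingAut Lbar) (hΦ : ∀ x : Lbar, Φ x = x ^ q) (t : ℕ) (a : Lbar) :
    C.τ ^ t * C.cst a = C.cst ((Φ ^ t) a) * C.τ ^ t := by
  induction t generalizing a with
  | zero => simp only [pow_zero, one_mul, mul_one]; rfl
  | succ i ih =>
      have h1 : (Φ ^ (i + 1)) a = (Φ ^ i) (Φ a) := by rw [pow_succ]; rfl
      calc C.τ ^ (i + 1) * C.cst a = C.τ ^ i * (C.τ * C.cst a) := by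
            rw [pow_succ]; rw [mul_assoc]
        _ = C.τ ^ i * (C.cst (a ^ q) * C.τ) := by rw [C.τ_comm]
        _ = (C.τ ^ i * C.cst (a ^ q)) * C.τ := by rw [mul_assoc]
        _ = C.cst ((Φ ^ i) (a ^ q)) * C.τ ^ i * C.τ := by rw [ih]
        _ = C.cst ((Φ ^ (i + 1)) a) * C.τ ^ (i + 1) := by
            rw [h1, hΦ, mul_assoc, ← pow_succ]

lemma aux_tau_zpow_cst (Φ : RingAut Lbar) (hΦ : ∀ x : Lbar, Φ x = x ^ q) (s : ℤ) (a : Lbar) :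
    C.τ ^ s * C.cst a = C.cst ((Φ ^ s) a) * C.τ ^ s := by
  rcases le_or_gt 0 s with hs | hs
  · have h1 : s = (s.toNat : ℤ) := (Int.toNat_of_nonneg hs).symm
    rw [h1, zpow_natCast, zpow_natCast]
    exact C.aux_tau_pow_cst Φ hΦ s.toNat a
  · set t : ℕ := (-s).toNat with htdef
    have ht : (t : ℤ) = -s := by omega
    set b : Lbar := (Φ ^ s) a with hb
    have hts : (t : ℤ) + s = 0 := by omega
    have h2 : (Φ ^ (t : ℤ)) b = a := by
      have h0 : Φ ^ (t : ℤ) * Φ ^ s = 1 := by rw [← zpow_add, hts, zpow_zero]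
      calc (Φ ^ (t : ℤ)) b = (Φ ^ (t : ℤ) * Φ ^ s) a := rfl
        _ = a := by rw [h0]; rfl
    have key : C.τ ^ (t : ℤ) * C.cst b = C.cst a * C.τ ^ (t : ℤ) := by
      have h3 := C.aux_tau_pow_cst Φ hΦ t b
      rw [← zpow_natCast C.τ, ← zpow_natCast Φ] at h3
      rw [h3, h2]
    have hcancel : C.τ ^ (t : ℤ) * C.τ ^ s = 1 := by
      rw [← zpow_add₀ C.aux_tau_ne, hts, zpow_zero]
    have hcancel' : C.τ ^ s * C.τ ^ (t : ℤ) = 1 := by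
      rw [← zpow_add₀ C.aux_tau_ne]
      have : s + (t : ℤ) = 0 := by omega
      rw [this, zpow_zero]
    calc C.τ ^ s * C.cst a = C.τ ^ s * (C.cst a * C.τ ^ (t : ℤ)) * C.τ ^ s := by
          rw [mul_assoc, mul_assoc, hcancel, mul_one]
      _ = C.τ ^ s * (C.τ ^ (t : ℤ) * C.cst b) * C.τ ^ s := by rw [key]
      _ = (C.τ ^ s * C.τ ^ (t : ℤ)) * (C.cst b * C.τ ^ s) := by
          rw [mul_assoc, mul_assoc, mul_assoc]
      _ = C.cst b * C.τ ^ s := by rw [hcancel', one_mul]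

lemma aux_mono_mul (Φ : RingAut Lbar) (hΦ : ∀ x : Lbar, Φ x = x ^ q) (a b : Lbar) (s t : ℤ) :
    (C.cst a * C.τ ^ s) * (C.cst b * C.τ ^ t) = C.cst (a * (Φ ^ s) b) * C.τ ^ (s + t) := by
  rw [map_mul]
  calc C.cst a * C.τ ^ s * (C.cst b * C.τ ^ t)
      = C.cst a * (C.τ ^ s * C.cst b) * C.τ ^ t := by rw [mul_assoc, mul_assoc, mul_assoc]
    _ = C.cst a * (C.cst ((Φ ^ s) b) * C.τ ^ s) * C.τ ^ t := by rw [C.aux_tau_zpow_cst Φ hΦ]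
    _ = C.cst a * C.cst ((Φ ^ s) b) * (C.τ ^ s * C.τ ^ t) := by
        rw [mul_assoc, mul_assoc, mul_assoc]
    _ = C.cst a * C.cst ((Φ ^ s) b) * C.τ ^ (s + t) := by rw [zpow_add₀ C.aux_tau_ne]

end AuxCoeff

section AuxMul

lemma aux_coeff_trunc {α : Type*} (s : Finset ℤ) (cfs : ℤ → Lbar) (j : ℤ) :
    C.coeff (∑ a ∈ s, C.cst (cfs a) * C.τ ^ (-a)) j = if j ∈ s then cfs j else 0 := by
  rw [C.aux_coeff_sum]
  have h1 : ∀ a ∈ s, C.coeff (C.cst (cfs a) * C.τ ^ (-a)) j = if j = a then cfs a else 0 := by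
    intro a _
    rw [C.coeff_monomial]
    congr 1
    simp [neg_neg]
  rw [Finset.sum_congr rfl h1]
  simp [Finset.sum_ite_eq]

/-- The fundamental product formula for coefficients of twisted Laurent series. -/
lemma aux_coeff_mul (Φ : RingAut Lbar) (hΦ : ∀ x : Lbar, Φ x = x ^ q) (f g : R) (Nf Ng : ℤ)
    (hf : ∀ j, j < Nf → C.coeff f j = 0) (hg : ∀ j, j < Ng → C.coeff g j = 0) (i : ℤ) :
    C.coeff (f * g) i
      = ∑ a ∈ Finset.Icc Nf (i - Ng), C.coeff f a * (Φ ^ (-a)) (C.coeff g (i - a)) := by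
  by_cases hcase : Nf + Ng ≤ i
  · set t : R := ∑ a ∈ Finset.Icc Nf (i - Ng), C.cst (C.coeff f a) * C.τ ^ (-a) with htd
    set s : R := ∑ b ∈ Finset.Icc Ng (i - Nf), C.cst (C.coeff g b) * C.τ ^ (-b) with hsd
    have hts : ∀ j, C.coeff t j = if j ∈ Finset.Icc Nf (i - Ng) then C.coeff f j else 0 :=
      fun j => C.aux_coeff_trunc (α := ℤ) _ _ j
    have hss : ∀ j, C.coeff s j = if j ∈ Finset.Icc Ng (i - Nf) then C.coeff g j else 0 :=
      fun j => C.aux_coeff_trunc (α := ℤ) _ _ j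
    have htlow : ∀ j, j < Nf → C.coeff t j = 0 := by
      intro j hj; rw [hts]; rw [if_neg]; simp only [Finset.mem_Icc]; omega
    have h1 : C.coeff (t * (g - s)) i = 0 := by
      refine C.aux_mul_coeff_zero htlow (M := i - Nf + 1) ?_ (by omega)
      intro j hj
      rw [C.aux_coeff_sub, hss]
      by_cases hjm : j ∈ Finset.Icc Ng (i - Nf)
      · rw [if_pos hjm]; ring
      · rw [if_neg hjm, sub_zero]
        refine hg j ?_
        simp only [Finset.mem_Icc] at hjm; omega
    have h2 : C.coeff ((f - t) * g) i = 0 := by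
      refine C.aux_mul_coeff_zero (N := i - Ng + 1) ?_ hg (by omega)
      intro j hj
      rw [C.aux_coeff_sub, hts]
      by_cases hjm : j ∈ Finset.Icc Nf (i - Ng)
      · rw [if_pos hjm]; ring
      · rw [if_neg hjm, sub_zero]
        refine hf j ?_
        simp only [Finset.mem_Icc] at hjm; omega
    have hfg : f * g = t * s + (t * (g - s) + (f - t) * g) := by
      rw [mul_sub, sub_mul]; abel
    rw [hfg, C.coeff_add, C.coeff_add, h1, h2, add_zero, add_zero]
    -- now coeff (t * s) i
    rw [htd, hsd, Finset.sum_mul_sum]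
    rw [C.aux_coeff_sum]
    have hterm : ∀ a ∈ Finset.Icc Nf (i - Ng),
        C.coeff (∑ b ∈ Finset.Icc Ng (i - Nf),
          (C.cst (C.coeff f a) * C.τ ^ (-a)) * (C.cst (C.coeff g b) * C.τ ^ (-b))) i
        = C.coeff f a * (Φ ^ (-a)) (C.coeff g (i - a)) := by
      intro a ha
      rw [C.aux_coeff_sum]
      have h3 : ∀ b ∈ Finset.Icc Ng (i - Nf),
          C.coeff ((C.cst (C.coeff f a) * C.τ ^ (-a)) * (C.cst (C.coeff g b) * C.τ ^ (-b))) i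
          = if b = i - a then C.coeff f a * (Φ ^ (-a)) (C.coeff g b) else 0 := by
        intro b _
        rw [C.aux_mono_mul Φ hΦ, C.coeff_monomial]
        by_cases hb : b = i - a
        · rw [if_pos (show i = -(-a + -b) by omega), if_pos hb]
        · rw [if_neg (show ¬ i = -(-a + -b) by omega), if_neg hb]
      rw [Finset.sum_congr rfl h3, Finset.sum_ite_eq' (Finset.Icc Ng (i - Nf)) (i - a)]
      rw [if_pos]
      simp only [Finset.mem_Icc] at ha ⊢; omega
    rw [Finset.sum_congr rfl hterm]
  · have hempty : Finset.Icc Nf (i - Ng) = ∅ := Finset.Icc_eq_empty (by omega)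
    rw [hempty, Finset.sum_empty]
    exact C.aux_mul_coeff_zero hf hg (by omega)

lemma aux_coeff_mul_tau (Φ : RingAut Lbar) (hΦ : ∀ x : Lbar, Φ x = x ^ q) (x : R) (m i : ℤ) :
    C.coeff (x * C.τ ^ m) i = C.coeff x (i + m) := by
  obtain ⟨N, hN⟩ := C.coeff_bddBelow x
  have hτ : ∀ j, j < -m → C.coeff (C.τ ^ m) j = 0 := by
    intro j hj; rw [C.aux_coeff_tau_zpow]; exact if_neg (by omega)
  rw [C.aux_coeff_mul Φ hΦ x (C.τ ^ m) N (-m) hN hτ i]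
  have hterm : ∀ a ∈ Finset.Icc N (i - -m),
      C.coeff x a * (Φ ^ (-a)) (C.coeff (C.τ ^ m) (i - a))
      = if a = i + m then C.coeff x a else 0 := by
    intro a _
    rw [C.aux_coeff_tau_zpow]
    by_cases ham : a = i + m
    · rw [if_pos ham, if_pos (by omega), map_one, mul_one]
    · rw [if_neg ham, if_neg (by omega), map_zero, mul_zero]
  rw [Finset.sum_congr rfl hterm, Finset.sum_ite_eq' (Finset.Icc N (i - -m)) (i + m)]
  by_cases hmem : i + m ∈ Finset.Icc N (i - -m)
  · rw [if_pos hmem]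
  · rw [if_neg hmem]
    refine (hN (i + m) ?_).symm
    simp only [Finset.mem_Icc] at hmem; omega

lemma aux_coeff_tau_mul (Φ : RingAut Lbar) (hΦ : ∀ x : Lbar, Φ x = x ^ q) (x : R) (m i : ℤ) :
    C.coeff (C.τ ^ m * x) i = (Φ ^ m) (C.coeff x (i + m)) := by
  obtain ⟨N, hN⟩ := C.coeff_bddBelow x
  have hτ : ∀ j, j < -m → C.coeff (C.τ ^ m) j = 0 := by
    intro j hj; rw [C.aux_coeff_tau_zpow]; exact if_neg (by omega)
  rw [C.aux_coeff_mul Φ hΦ (C.τ ^ m) x (-m) N hτ hN i]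
  have hterm : ∀ a ∈ Finset.Icc (-m) (i - N),
      C.coeff (C.τ ^ m) a * (Φ ^ (-a)) (C.coeff x (i - a))
      = if a = -m then (Φ ^ m) (C.coeff x (i + m)) else 0 := by
    intro a _
    rw [C.aux_coeff_tau_zpow]
    by_cases ham : a = -m
    · rw [if_pos ham, if_pos ham, one_mul, ham]
      congr 2
      · omega
      · omega
    · rw [if_neg ham, if_neg ham, zero_mul]
  rw [Finset.sum_congr rfl hterm, Finset.sum_ite_eq' (Finset.Icc (-m) (i - N)) (-m)]
  by_cases hmem : -m ∈ Finset.Icc (-m) (i - N)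
  · rw [if_pos hmem]
  · rw [if_neg hmem]
    have : C.coeff x (i + m) = 0 := by
      refine hN (i + m) ?_
      simp only [Finset.mem_Icc] at hmem; omega
    rw [this, map_zero]

end AuxMul

section AuxAlg

lemma aux_q_zero (C : Ctx q n dinf k F Finf L Lbar R) : (q : Lbar) = 0 := by
  have h1 : ((Fintype.card k : ℕ) : k) = 0 := FiniteField.cast_card_eq_zero k
  rw [C.card_k] at h1
  have h2 : algebraMap k Lbar ((q : ℕ) : k) = (q : Lbar) := map_natCast _ q
  rw [h1, map_zero] at h2
  exact h2.symm

lemma aux_alg_rel {β γ z : Lbar} (hβ : IsAlgebraic k β) (hγ : IsAlgebraic k γ) {N' : ℕ}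
    (h2 : 2 ≤ N') (heq : z ^ N' = β * z + γ) : IsAlgebraic k z := by
  set kb := integralClosure k Lbar with hkb
  have hβ' : β ∈ kb := isAlgebraic_iff_isIntegral.mp hβ
  have hγ' : γ ∈ kb := isAlgebraic_iff_isIntegral.mp hγ
  have hz : IsIntegral kb z := by
    refine ⟨Polynomial.X ^ N' - (Polynomial.C ⟨β, hβ'⟩ * Polynomial.X + Polynomial.C ⟨γ, hγ'⟩),
      ?_, ?_⟩
    · refine (Polynomial.monic_X_pow N').sub_of_left ?_
      refine lt_of_le_of_lt (Polynomial.degree_add_le _ _) ?_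
      rw [Polynomial.degree_X_pow]
      have d1 : (Polynomial.C (⟨β, hβ'⟩ : kb) * Polynomial.X).degree ≤ 1 := by
        refine le_trans (Polynomial.degree_mul_le _ _) ?_
        rw [Polynomial.degree_X]
        refine le_trans (add_le_add_left (Polynomial.degree_C_le) 1) ?_
        simp
      have d2 : (Polynomial.C (⟨γ, hγ'⟩ : kb)).degree ≤ 1 :=
        le_trans Polynomial.degree_C_le (by norm_num)
      have : (1 : WithBot ℕ) < (N' : WithBot ℕ) := by exact_mod_cast h2
      exact lt_of_le_of_lt (max_le d1 d2) this
    · rw [Polynomial.eval₂_sub, Polynomial.eval₂_add, Polynomial.eval₂_mul,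
        Polynomial.eval₂_pow, Polynomial.eval₂_X, Polynomial.eval₂_C, Polynomial.eval₂_C]
      have hb : algebraMap kb Lbar ⟨β, hβ'⟩ = β := rfl
      have hg : algebraMap kb Lbar ⟨γ, hγ'⟩ = γ := rfl
      rw [hb, hg, heq, sub_self]
  exact isAlgebraic_iff_isIntegral.mpr (isIntegral_trans (R := k) (A := kb) z hz)

lemma aux_alg_of_fixed {x : Lbar} {N' : ℕ} (h2 : 2 ≤ N') (h : x ^ N' = x) :
    IsAlgebraic k x := by
  refine aux_alg_rel (k := k) isAlgebraic_one isAlgebraic_zero h2 ?_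
  rw [one_mul, add_zero, h]

lemma aux_alg_frob (C : Ctx q n dinf k F Finf L Lbar R) (Φ : RingAut Lbar)
    (hΦ : ∀ x : Lbar, Φ x = x ^ q) (z : ℤ) {x : Lbar} (hx : IsAlgebraic k x) :
    IsAlgebraic k ((Φ ^ z) x) := by
  rcases le_or_gt 0 z with hz | hz
  · rw [aux_frob_zpow_nonneg Φ hΦ hz]
    exact isAlgebraic_iff_isIntegral.mpr ((isAlgebraic_iff_isIntegral.mp hx).pow _)
  · set y := (Φ ^ z) x with hy
    have h1 : y ^ q ^ (-z).toNat = x := by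
      rw [← aux_frob_zpow_nonneg Φ hΦ (by omega : (0:ℤ) ≤ -z), hy, aux_frob_cancel]
    refine aux_alg_rel (k := k) (N' := q ^ (-z).toNat) isAlgebraic_zero hx ?_ ?_
    · have hq2 : 2 ≤ q := C.one_lt_q
      calc 2 ≤ q ^ 1 := by rwa [pow_one]
        _ ≤ q ^ (-z).toNat := Nat.pow_le_pow_right (by omega) (by omega)
    · rw [zero_mul, zero_add, h1]

lemma aux_alg_mem_sep {x : Lbar} (hx : IsAlgebraic k x) :
    x ∈ separableClosure L Lbar := by
  rw [mem_separableClosure_iff]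
  have hint : IsIntegral k x := isAlgebraic_iff_isIntegral.mp hx
  have hsepk : (minpoly k x).Separable :=
    PerfectField.separable_of_irreducible (minpoly.irreducible hint)
  have hdvd : minpoly L x ∣ (minpoly k x).map (algebraMap k L) :=
    minpoly.dvd_map_of_isScalarTower k L x
  exact Polynomial.Separable.of_dvd (Polynomial.Separable.map hsepk) hdvd

end AuxAlg

section AuxRec

/-- generic strong recursion with junk value outside the domain -/
noncomputable def mkSeq {T : Type*} [Zero T] (z0 : T) (sol : T → T) (Kf : ℕ → (ℕ → T) → T) :
    ℕ → T
  | j => if j = 0 then z0 else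
      sol (Kf j (fun b => if _h : b < j then mkSeq z0 sol Kf b else 0))
  decreasing_by exact _h

lemma mkSeq_spec {T : Type*} [Zero T] (z0 : T) (sol : T → T) (Kf : ℕ → (ℕ → T) → T) (j : ℕ) :
    mkSeq z0 sol Kf j = if j = 0 then z0 else
      sol (Kf j (fun b => if b < j then mkSeq z0 sol Kf b else 0)) := by
  rw [mkSeq]
  simp only [dite_eq_ite]

lemma aux_root1 (C : Ctx q n dinf k F Finf L Lbar R) (N' : ℕ) (hN : 2 ≤ N')
    (hNT : ((N' : ℕ) : separableClosure L Lbar) = 0) (d : separableClosure L Lbar)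
    (hd : d ≠ 0) : ∃ z : separableClosure L Lbar, z ≠ 0 ∧ d * z ^ N' = z := by
  haveI : IsAlgClosed Lbar := C.algClosure.isAlgClosed
  haveI : IsSepClosed (separableClosure L Lbar) :=
    (separableClosure.isSepClosure L Lbar).sep_closed
  set P : Polynomial (separableClosure L Lbar) :=
    Polynomial.X ^ (N' - 1) - Polynomial.C d⁻¹ with hP
  have hsep : P.Separable := by
    refine Polynomial.separable_X_pow_sub_C d⁻¹ ?_ (inv_ne_zero hd)
    have h1 : ((N' - 1 : ℕ) : separableClosure L Lbar)
        = ((N' : ℕ) : separableClosure L Lbar) - 1 := by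
      rw [Nat.cast_sub (by omega)]; norm_num
    rw [h1, hNT, zero_sub]
    exact neg_ne_zero.mpr one_ne_zero
  have hdeg : P.degree ≠ 0 := by
    rw [hP, Polynomial.degree_X_pow_sub_C (by omega) d⁻¹]
    exact_mod_cast (by omega : N' - 1 ≠ 0)
  obtain ⟨z, hz⟩ := IsSepClosed.exists_root P hdeg hsep
  rw [Polynomial.IsRoot, hP, Polynomial.eval_sub, Polynomial.eval_pow, Polynomial.eval_X,
    Polynomial.eval_C, sub_eq_zero] at hz
  have hzne : z ≠ 0 := by
    intro h0
    rw [h0, zero_pow (by omega : N' - 1 ≠ 0)] at hz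
    exact inv_ne_zero hd hz.symm
  refine ⟨z, hzne, ?_⟩
  have h2 : z ^ N' = z ^ (N' - 1) * z := by
    rw [← pow_succ]; congr 1; omega
  rw [h2, hz, ← mul_assoc, mul_inv_cancel₀ hd, one_mul]

lemma aux_root2 (C : Ctx q n dinf k F Finf L Lbar R) (N' : ℕ) (hN : 2 ≤ N')
    (hNT : ((N' : ℕ) : separableClosure L Lbar) = 0) (d e : separableClosure L Lbar)
    (hd : d ≠ 0) : ∃ z : separableClosure L Lbar, d * z ^ N' + e = z := by
  haveI : IsAlgClosed Lbar := C.algClosure.isAlgClosed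
  haveI : IsSepClosed (separableClosure L Lbar) :=
    (separableClosure.isSepClosure L Lbar).sep_closed
  set P : Polynomial (separableClosure L Lbar) :=
    Polynomial.C d * Polynomial.X ^ N' - Polynomial.X + Polynomial.C e with hP
  have hder : P.derivative = -1 := by
    rw [hP]
    rw [Polynomial.derivative_add, Polynomial.derivative_sub, Polynomial.derivative_C,
      Polynomial.derivative_C_mul, Polynomial.derivative_X_pow, Polynomial.derivative_X,
      hNT]
    simp
  have hsep : P.Separable := by
    rw [Polynomial.Separable, hder]
    exact ⟨0, -1, by ring⟩
  have hcoeff : P.coeff N' = d := by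
    rw [hP]
    rw [Polynomial.coeff_add, Polynomial.coeff_sub, Polynomial.coeff_C_mul,
      Polynomial.coeff_X_pow, Polynomial.coeff_X, Polynomial.coeff_C]
    rw [if_pos rfl, if_neg (by omega), if_neg (by omega)]
    ring
  have hdeg : P.degree ≠ 0 := by
    intro h0
    have h1 : (N' : WithBot ℕ) ≤ P.degree := Polynomial.le_degree_of_ne_zero (by
      rw [hcoeff]; exact hd)
    rw [h0] at h1
    have : N' = 0 := by exact_mod_cast le_antisymm h1 (by exact_mod_cast Nat.zero_le N')
    omega
  obtain ⟨z, hz⟩ := IsSepClosed.exists_root P hdeg hsep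
  rw [Polynomial.IsRoot, hP, Polynomial.eval_add, Polynomial.eval_sub, Polynomial.eval_mul,
    Polynomial.eval_pow, Polynomial.eval_X, Polynomial.eval_C, Polynomial.eval_C] at hz
  refine ⟨z, ?_⟩
  have : d * z ^ N' - z + e = 0 := hz
  linear_combination this

lemma aux_q_zero_T (C : Ctx q n dinf k F Finf L Lbar R) :
    ((q : ℕ) : separableClosure L Lbar) = 0 := by
  have h1 : (((q : ℕ) : separableClosure L Lbar) : Lbar) = ((q : ℕ) : Lbar) := by
    push_cast; ring
  rw [C.aux_q_zero] at h1
  exact_mod_cast h1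

/-- The construction of the conjugating series `u'` with separable coefficients. -/
lemma aux_construct (C : Ctx q n dinf k F Finf L Lbar R) (Φ : RingAut Lbar)
    (hΦ : ∀ x : Lbar, Φ x = x ^ q) :
    ∃ (a : ↥C.A) (m : ℕ) (u' : R), 1 ≤ m ∧ u' ≠ 0 ∧
      (∀ j : ℤ, j < 0 → C.coeff u' j = 0) ∧
      (∀ i : ℤ, C.coeff u' i ∈ separableClosure L Lbar) ∧
      (∀ j : ℤ, j < -(m : ℤ) → C.coeff (C.φ a) j = 0) ∧
      C.coeff (C.φ a) (-(m : ℤ)) ≠ 0 ∧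
      u' * C.τ ^ (m : ℤ) = C.φ a * u' := by
  classical
  obtain ⟨a, i₀, hi₀ne, hi₀⟩ := C.φ_nonconst
  set f : R := C.φ a with hfdef
  obtain ⟨N, hN⟩ := C.coeff_bddBelow f
  obtain ⟨j₀, hj₀mem, hj₀min⟩ := Int.exists_least_of_bdd
    (P := fun z => C.coeff f z ≠ 0)
    ⟨N, fun z hz => le_of_not_gt (fun h => hz (hN z h))⟩ ⟨i₀, hi₀⟩
  have hi₀neg : i₀ < 0 := by
    rcases lt_trichotomy i₀ 0 with h | h | h
    · exact h
    · exact absurd h hi₀ne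
    · exact absurd (C.φ_poly a i₀ h) hi₀
  have hj₀neg : j₀ < 0 := lt_of_le_of_lt (hj₀min i₀ hi₀) hi₀neg
  set m : ℕ := (-j₀).toNat with hmdef
  have hm : (m : ℤ) = -j₀ := by omega
  have hm1 : 1 ≤ m := by omega
  have hflow : ∀ j : ℤ, j < -(m : ℤ) → C.coeff f j = 0 := by
    intro j hj
    by_contra hc
    have := hj₀min j hc
    omega
  have hfm : C.coeff f (-(m : ℤ)) ≠ 0 := by
    have h1 : -(m : ℤ) = j₀ := by omega
    rw [h1]; exact hj₀mem
  have hftop : ∀ j : ℤ, 0 < j → C.coeff f j = 0 := C.φ_poly a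
  set T := separableClosure L Lbar with hTdef
  have hfT : ∀ j : ℤ, C.coeff f j ∈ T := by
    intro j
    obtain ⟨l, hl⟩ := C.φ_coeff_L a j
    rw [← hl]
    exact T.algebraMap_mem l
  set d : ℤ → T := fun j => ⟨C.coeff f j, hfT j⟩ with hddef
  set N' : ℕ := q ^ m with hN'def
  have hq2 : 2 ≤ q := C.one_lt_q
  have hN2 : 2 ≤ N' := by
    calc 2 ≤ q ^ 1 := by rwa [pow_one]
      _ ≤ q ^ m := Nat.pow_le_pow_right (by omega) hm1
  have hNT : ((N' : ℕ) : T) = 0 := by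
    rw [hN'def]
    push_cast
    rw [C.aux_q_zero_T]
    exact zero_pow (by omega)
  have hdm : d (-(m : ℤ)) ≠ 0 := fun h => hfm (congrArg Subtype.val h)
  obtain ⟨z0, hz0ne, hz0⟩ := C.aux_root1 N' hN2 hNT (d (-(m : ℤ))) hdm
  have hsolex : ∀ e : T, ∃ z : T, d (-(m : ℤ)) * z ^ N' + e = z :=
    fun e => C.aux_root2 N' hN2 hNT (d (-(m : ℤ))) e hdm
  set sol : T → T := fun e => (hsolex e).choose with hsoldef
  have hsol : ∀ e : T, d (-(m : ℤ)) * (sol e) ^ N' + e = sol e := fun e => (hsolex e).choose_spec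
  set Kf : ℕ → (ℕ → T) → T := fun j prev =>
    ∑ b ∈ Finset.Ioc (-(m : ℤ)) 0, d b *
      (if 0 ≤ (j : ℤ) - m - b then prev ((j : ℤ) - m - b).toNat else 0) ^ q ^ (-b).toNat
    with hKfdef
  set c : ℕ → T := mkSeq z0 sol Kf with hcdef
  set cz : ℤ → T := fun t => if 0 ≤ t then c t.toNat else 0 with hczdef
  have hczpos : ∀ t : ℤ, 0 ≤ t → cz t = c t.toNat := fun t ht => if_pos ht
  have hczneg : ∀ t : ℤ, t < 0 → cz t = 0 := fun t ht => if_neg (by omega)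
  -- the recurrence satisfied by `c`
  have hrec : ∀ j : ℕ, c j = d (-(m : ℤ)) * (c j) ^ N' +
      ∑ b ∈ Finset.Ioc (-(m : ℤ)) 0, d b * (cz ((j : ℤ) - m - b)) ^ q ^ (-b).toNat := by
    intro j
    have hguard : Kf j (fun b => if b < j then c b else 0)
        = ∑ b ∈ Finset.Ioc (-(m : ℤ)) 0, d b * (cz ((j : ℤ) - m - b)) ^ q ^ (-b).toNat := by
      rw [hKfdef]
      refine Finset.sum_congr rfl ?_
      intro b hb
      simp only [Finset.mem_Ioc] at hb
      congr 2
      by_cases hpos : 0 ≤ (j : ℤ) - m - b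
      · rw [if_pos hpos]
        have hlt : ((j : ℤ) - m - b).toNat < j := by omega
        show (if ((j : ℤ) - m - b).toNat < j then c (((j : ℤ) - m - b).toNat) else 0) = _
        rw [if_pos hlt, hczpos _ hpos]
      · rw [if_neg hpos, hczneg _ (by omega)]
    by_cases hj : j = 0
    · have hz : c j = z0 := by rw [hcdef, mkSeq_spec, if_pos hj]
      have hsum : ∑ b ∈ Finset.Ioc (-(m : ℤ)) 0, d b *
          (cz ((j : ℤ) - m - b)) ^ q ^ (-b).toNat = 0 := by
        refine Finset.sum_eq_zero ?_
        intro b hb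
        simp only [Finset.mem_Ioc] at hb
        rw [hczneg _ (by omega), zero_pow (by positivity), mul_zero]
      rw [hsum, add_zero, hz, hz0]
    · have hz : c j = sol (Kf j (fun b => if b < j then c b else 0)) := by
        rw [hcdef, mkSeq_spec, if_neg hj]
      rw [hz, hguard]
      exact (hsol _).symm
  -- build u'
  obtain ⟨u', hu'⟩ := C.coeff_surjective (fun i => ((cz i : T) : Lbar))
    ⟨0, fun i hi => by show ((cz i : T) : Lbar) = 0; rw [hczneg _ (by omega)]; rfl⟩
  have hu'c : ∀ i : ℤ, C.coeff u' i = ((cz i : T) : Lbar) := fun i => hu' i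
  have hu'low : ∀ j : ℤ, j < 0 → C.coeff u' j = 0 := by
    intro j hj
    rw [hu'c j, hczneg _ (by omega)]
    rfl
  have hc0 : c 0 = z0 := by rw [hcdef, mkSeq_spec, if_pos rfl]
  have hu'ne : u' ≠ 0 := by
    intro h0
    have h1 : C.coeff u' 0 = 0 := by rw [h0]; exact C.aux_coeff_zero 0
    rw [hu'c 0, hczpos 0 le_rfl, Int.toNat_zero, hc0] at h1
    exact hz0ne (Subtype.coe_injective h1)
  have hu'sep : ∀ i : ℤ, C.coeff u' i ∈ T := by
    intro i
    rw [hu'c i]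
    exact (cz i).2
  -- the key identity
  have hkey : u' * C.τ ^ (m : ℤ) = f * u' := by
    apply C.coeff_injective
    intro i
    rw [C.aux_coeff_mul_tau Φ hΦ u' (m : ℤ) i]
    rw [C.aux_coeff_mul Φ hΦ f u' (-(m : ℤ)) 0 hflow (fun j hj => hu'low j hj) i]
    rcases lt_or_ge (i + m) 0 with hcase | hcase
    · -- both sides vanish
      have he : Finset.Icc (-(m : ℤ)) (i - 0) = ∅ := Finset.Icc_eq_empty (by omega)
      rw [he, Finset.sum_empty, hu'c (i + m), hczneg _ (by omega)]
      rfl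
    · -- main case
      set j : ℕ := (i + m).toNat with hjdef
      have hji : (j : ℤ) = i + m := by omega
      have hmem : -(m : ℤ) ∈ Finset.Icc (-(m : ℤ)) (i - 0) := by
        simp only [Finset.mem_Icc]; omega
      rw [← Finset.sum_erase_add _ _ hmem, Finset.Icc_erase_left]
      have hcz : ((cz (i + m) : T) : Lbar) = ((c j : T) : Lbar) := by
        rw [hczpos _ (by omega)]
      -- the top term
      have htop : C.coeff f (-(m : ℤ)) * (Φ ^ (-(-(m : ℤ)))) (C.coeff u' (i - -(m : ℤ)))
          = ((d (-(m : ℤ)) : T) : Lbar) * ((c j : T) : Lbar) ^ N' := by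
        congr 1
        rw [neg_neg, aux_frob_zpow_nonneg Φ hΦ (by omega : (0:ℤ) ≤ (m:ℤ))]
        rw [show i - -(m : ℤ) = i + m by ring, hu'c (i + m), hcz]
        rw [show ((m : ℤ)).toNat = m by omega, hN'def]
      rw [htop]
      -- the lower terms
      have hsum2 : ∑ b ∈ Finset.Ioc (-(m : ℤ)) (i - 0),
            C.coeff f b * (Φ ^ (-b)) (C.coeff u' (i - b))
          = ∑ b ∈ Finset.Ioc (-(m : ℤ)) 0,
            C.coeff f b * (Φ ^ (-b)) (C.coeff u' (i - b)) := by
        rcases le_or_gt 0 (i - 0) with hi0 | hi0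
        · refine (Finset.sum_subset ?_ ?_).symm
          · intro x hx
            simp only [Finset.mem_Ioc] at hx ⊢
            omega
          · intro x hx hnx
            simp only [Finset.mem_Ioc] at hx hnx
            rw [hftop x (by omega), zero_mul]
        · refine Finset.sum_subset ?_ ?_
          · intro x hx
            simp only [Finset.mem_Ioc] at hx ⊢
            omega
          · intro x hx hnx
            simp only [Finset.mem_Ioc] at hx hnx
            rw [hu'c (i - x), hczneg _ (by omega)]
            have h00 : ((0 : T) : Lbar) = 0 := rfl
            rw [h00, map_zero, mul_zero]
      rw [hsum2]
      have hterm : ∀ b ∈ Finset.Ioc (-(m : ℤ)) 0,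
          C.coeff f b * (Φ ^ (-b)) (C.coeff u' (i - b))
          = ((d b : T) : Lbar) * ((cz (i - b) : T) : Lbar) ^ q ^ (-b).toNat := by
        intro b hb
        simp only [Finset.mem_Ioc] at hb
        rw [aux_frob_zpow_nonneg Φ hΦ (by omega : (0:ℤ) ≤ -b), hu'c (i - b)]
      rw [Finset.sum_congr rfl hterm, hu'c (i + m), hcz]
      -- conclude via the recurrence
      have h0 := hrec j
      have hidx : ∀ b ∈ Finset.Ioc (-(m : ℤ)) 0,
          d b * (cz ((j : ℤ) - m - b)) ^ q ^ (-b).toNat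
          = d b * (cz (i - b)) ^ q ^ (-b).toNat := by
        intro b _
        have hbi : (j : ℤ) - m - b = i - b := by omega
        rw [hbi]
      rw [Finset.sum_congr rfl hidx] at h0
      have h1 := congrArg (fun x : T => (x : Lbar)) h0
      try simp only at h1
      push_cast at h1
      linear_combination h1
  exact ⟨a, m, u', hm1, hu'ne, hu'low, hu'sep, hflow, hfm, hkey⟩

end AuxRec

section AuxFinal

lemma aux_alg_mul {x y : Lbar} (hx : IsAlgebraic k x) (hy : IsAlgebraic k y) :
    IsAlgebraic k (x * y) := by
  rw [isAlgebraic_iff_isIntegral] at *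
  exact hx.mul hy

lemma aux_alg_finsum {α : Type*} (s : Finset α) (G : α → Lbar)
    (hG : ∀ x ∈ s, IsAlgebraic k (G x)) : IsAlgebraic k (∑ x ∈ s, G x) := by
  rw [isAlgebraic_iff_isIntegral]
  have h1 : ∀ x ∈ s, G x ∈ integralClosure k Lbar :=
    fun x hx => isAlgebraic_iff_isIntegral.mp (hG x hx)
  exact (mem_integralClosure_iff k Lbar).mp (Subalgebra.sum_mem _ h1)

lemma aux_conj_mul (u x y : R) (hu : u ≠ 0) :
    (u⁻¹ * x * u) * (u⁻¹ * y * u) = u⁻¹ * (x * y) * u := by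
  have h1 : u * (u⁻¹ * y * u) = y * u := by
    rw [← mul_assoc, ← mul_assoc, mul_inv_cancel₀ hu, one_mul]
  calc (u⁻¹ * x * u) * (u⁻¹ * y * u) = (u⁻¹ * x) * (u * (u⁻¹ * y * u)) := by
        rw [mul_assoc]
    _ = (u⁻¹ * x) * (y * u) := by rw [h1]
    _ = u⁻¹ * (x * y) * u := by rw [mul_assoc, mul_assoc, mul_assoc]

lemma aux_w_eq {f : R} {N : ℤ} (hlow : ∀ j < N, C.coeff f j = 0) (hne : C.coeff f N ≠ 0) :
    C.w f = (N : WithTop ℤ) := by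
  have h1 : (N : WithTop ℤ) ≤ C.w f := C.aux_le_w hlow
  have h2 : ¬ (((N + 1 : ℤ)) : WithTop ℤ) ≤ C.w f :=
    fun hcon => hne (C.aux_coeff_eq_zero_of_le hcon (by omega))
  have hne_top : C.w f ≠ ⊤ := by
    intro htop
    exact h2 (htop ▸ le_top)
  obtain ⟨wv, hwv⟩ := WithTop.ne_top_iff_exists.mp hne_top
  rw [← hwv] at h1 h2 ⊢
  rw [WithTop.coe_le_coe] at h1
  have h3 : ¬ (N + 1 ≤ wv) := fun hh => h2 (WithTop.coe_le_coe.mpr hh)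
  have : wv = N := by omega
  rw [this]

lemma aux_w_inv {u : R} (hu : u ≠ 0) : C.w u⁻¹ + C.w u = 0 := by
  rw [← C.w_val.map_mul, inv_mul_cancel₀ hu, C.aux_w_one]

lemma aux_w_conj (u f : R) (hu : u ≠ 0) : C.w (u⁻¹ * f * u) = C.w f := by
  by_cases hf : f = 0
  · rw [hf, mul_zero, zero_mul]
  · have hwu : C.w u ≠ ⊤ := fun h => hu ((C.w_val.top_iff u).mp h)
    have hwui : C.w u⁻¹ ≠ ⊤ := fun h => (inv_ne_zero hu) ((C.w_val.top_iff u⁻¹).mp h)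
    have hwf : C.w f ≠ ⊤ := fun h => hf ((C.w_val.top_iff f).mp h)
    obtain ⟨b, hb⟩ := WithTop.ne_top_iff_exists.mp hwu
    obtain ⟨c, hc⟩ := WithTop.ne_top_iff_exists.mp hwui
    obtain ⟨e, he⟩ := WithTop.ne_top_iff_exists.mp hwf
    have hcb : c + b = 0 := by
      have h1 := C.aux_w_inv hu
      rw [← hb, ← hc, ← WithTop.coe_add] at h1
      exact_mod_cast h1
    rw [C.w_val.map_mul, C.w_val.map_mul, ← hb, ← hc, ← he, ← WithTop.coe_add,
      ← WithTop.coe_add, WithTop.coe_inj]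
    omega

lemma aux_exists_least_coeff (v : R) (hv : v ≠ 0) :
    ∃ M : ℤ, C.coeff v M ≠ 0 ∧ ∀ j < M, C.coeff v j = 0 := by
  obtain ⟨N, hN⟩ := C.coeff_bddBelow v
  have hex : ∃ z : ℤ, C.coeff v z ≠ 0 := by
    by_contra hc
    push_neg at hc
    exact hv (C.coeff_injective v 0 (fun i => by rw [hc i, C.aux_coeff_zero]))
  obtain ⟨M, hM, hMmin⟩ := Int.exists_least_of_bdd
    ⟨N, fun z hz => le_of_not_gt fun hh => hz (hN z hh)⟩ hex
  refine ⟨M, hM, fun j hj => ?_⟩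
  by_contra hc
  have := hMmin j hc
  omega

end AuxFinal

/-- **Lemma 2.2(i).**
Let `φ : A → L[τ]` be a Drinfeld module of rank `n`.  There exists a series
`u ∈ L̄((τ⁻¹))^×` with `u⁻¹ · φ(F_∞) · u ⊆ k̄((τ⁻¹))`, and any such `u` has all of its
coefficients in the separable closure `L^sep` of `L` in `L̄`. -/
theorem exists_u_and_coeff_separable :
    (∃ u : R, C.UGoodInf u) ∧
      ∀ u : R, C.UGoodInf u → ∀ i : ℤ, C.coeff u i ∈ separableClosure L Lbar := by
  obtain ⟨Φ, hΦ⟩ := C.aux_exists_frob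
  obtain ⟨a, m, u', hm1, hu'ne, hu'low, hu'sep, hflow, hfm, hkey⟩ := C.aux_construct Φ hΦ
  set f : R := C.φ a with hfdef
  have hq2 : 2 ≤ q := C.one_lt_q
  have hN2 : 2 ≤ q ^ m := by
    calc 2 ≤ q ^ 1 := by rwa [pow_one]
      _ ≤ q ^ m := Nat.pow_le_pow_right (by omega) hm1
  have hconj : u'⁻¹ * f * u' = C.τ ^ (m : ℤ) := by
    rw [mul_assoc, ← hkey, ← mul_assoc, inv_mul_cancel₀ hu'ne, one_mul]
  constructor
  · -- existence
    refine ⟨u', hu'ne, ?_⟩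
    intro x i
    set g : R := u'⁻¹ * C.phiinf x * u' with hgdef
    have hfp : C.phiinf x * f = f * C.phiinf x := by
      rw [hfdef, ← C.phiinf_extends a, ← map_mul, ← map_mul, mul_comm]
    have hcomm : g * C.τ ^ (m : ℤ) = C.τ ^ (m : ℤ) * g := by
      rw [hgdef, ← hconj, aux_conj_mul u' (C.phiinf x) f hu'ne,
        aux_conj_mul u' f (C.phiinf x) hu'ne]
      exact congrArg (fun z => u'⁻¹ * z * u') hfp
    have hfix : ∀ jj : ℤ, C.coeff g jj = (Φ ^ (m : ℤ)) (C.coeff g jj) := by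
      intro jj
      have e1 := C.aux_coeff_mul_tau Φ hΦ g (m : ℤ) (jj - m)
      have e2 := C.aux_coeff_tau_mul Φ hΦ g (m : ℤ) (jj - m)
      rw [hcomm] at e1
      have hidx : jj - (m : ℤ) + m = jj := by ring
      rw [hidx] at e1 e2
      exact e1.symm.trans e2
    have hz : C.coeff g i ^ q ^ m = C.coeff g i := by
      have h1 := hfix i
      rw [aux_frob_zpow_nonneg Φ hΦ (by omega : (0:ℤ) ≤ (m : ℤ)),
        show ((m : ℤ)).toNat = m by omega] at h1
      exact h1.symm
    exact aux_alg_of_fixed (k := k) hN2 hz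
  · -- any good u has separable coefficients
    rintro u ⟨hune, hualg⟩ i
    have hhalg : ∀ t : ℤ, IsAlgebraic k (C.coeff (u⁻¹ * f * u) t) := by
      intro t
      have h1 := hualg (algebraMap F Finf (a : F)) t
      rwa [C.phiinf_extends a, ← hfdef] at h1
    set h : R := u⁻¹ * f * u with hhdef
    have hwh : C.w h = ((-(m : ℤ) : ℤ) : WithTop ℤ) := by
      rw [hhdef, C.aux_w_conj u f hune, C.aux_w_eq hflow hfm]
    have hhlow : ∀ j : ℤ, j < -(m : ℤ) → C.coeff h j = 0 :=
      fun j hj => C.aux_coeff_eq_zero_of_le (le_of_eq hwh.symm) hj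
    have hhm : C.coeff h (-(m : ℤ)) ≠ 0 := by
      intro h0
      have h1 : ((-(m : ℤ) + 1 : ℤ) : WithTop ℤ) ≤ C.w h := by
        refine C.aux_le_w ?_
        intro j hj
        rcases lt_trichotomy j (-(m : ℤ)) with hlt | heq | hgt
        · exact hhlow j hlt
        · rw [heq]; exact h0
        · omega
      rw [hwh] at h1
      exact absurd (WithTop.coe_le_coe.mp h1) (by omega)
    set v : R := u'⁻¹ * u with hvdef
    have hvne : v ≠ 0 := mul_ne_zero (inv_ne_zero hu'ne) hune
    have hveq : C.τ ^ (m : ℤ) * v = v * h := by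
      have h1 : v * h = u'⁻¹ * f * u := by
        calc v * h = (u'⁻¹ * u) * (u⁻¹ * f * u) := by rw [hvdef, hhdef]
          _ = u'⁻¹ * (u * (u⁻¹ * f * u)) := by rw [mul_assoc]
          _ = u'⁻¹ * (f * u) := by
              rw [show u * (u⁻¹ * f * u) = f * u from by
                rw [← mul_assoc, ← mul_assoc, mul_inv_cancel₀ hune, one_mul]]
          _ = u'⁻¹ * f * u := by rw [mul_assoc]
      have h2 : C.τ ^ (m : ℤ) * v = u'⁻¹ * f * u := by
        calc C.τ ^ (m : ℤ) * v = (u'⁻¹ * f * u') * (u'⁻¹ * u) := by rw [hvdef, hconj]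
          _ = (u'⁻¹ * f) * (u' * (u'⁻¹ * u)) := by rw [mul_assoc]
          _ = (u'⁻¹ * f) * u := by rw [← mul_assoc u' u'⁻¹ u, mul_inv_cancel₀ hu'ne, one_mul]
      rw [h1, h2]
    obtain ⟨Mv, hMvne, hMvlow⟩ := C.aux_exists_least_coeff v hvne
    have hvalg : ∀ jn : ℕ, IsAlgebraic k (C.coeff v (Mv + jn)) := by
      intro jn
      induction jn using Nat.strong_induction_on with
      | _ jn IH =>
      have e1 := C.aux_coeff_mul Φ hΦ v h Mv (-(m : ℤ)) hMvlow hhlow (Mv + jn - m)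
      have e2 := C.aux_coeff_tau_mul Φ hΦ v (m : ℤ) (Mv + jn - m)
      rw [← hveq] at e1
      rw [e2] at e1
      have hidx1 : Mv + (jn : ℤ) - m + m = Mv + jn := by ring
      have hidx2 : Mv + (jn : ℤ) - m - -(m : ℤ) = Mv + jn := by ring
      rw [hidx1, hidx2] at e1
      have hmem : Mv + (jn : ℤ) ∈ Finset.Icc Mv (Mv + (jn : ℤ)) := by
        simp only [Finset.mem_Icc]; omega
      rw [← Finset.sum_erase_add _ _ hmem, Finset.Icc_erase_right] at e1
      have hidx3 : Mv + (jn : ℤ) - m - (Mv + (jn : ℤ)) = -(m : ℤ) := by ring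
      rw [hidx3] at e1
      rw [aux_frob_zpow_nonneg Φ hΦ (by omega : (0:ℤ) ≤ (m : ℤ)),
        show ((m : ℤ)).toNat = m by omega] at e1
      have hβ : IsAlgebraic k ((Φ ^ (-(Mv + (jn : ℤ)))) (C.coeff h (-(m : ℤ)))) :=
        C.aux_alg_frob Φ hΦ _ (hhalg _)
      have hγ : IsAlgebraic k (∑ a' ∈ Finset.Ico Mv (Mv + (jn : ℤ)),
          C.coeff v a' * (Φ ^ (-a')) (C.coeff h (Mv + (jn : ℤ) - m - a'))) := by
        refine aux_alg_finsum (k := k) _ _ ?_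
        intro a' ha'
        simp only [Finset.mem_Ico] at ha'
        refine aux_alg_mul (k := k) ?_ (C.aux_alg_frob Φ hΦ _ (hhalg _))
        have h5 : a' = Mv + ((a' - Mv).toNat : ℤ) := by omega
        rw [h5]
        exact IH (a' - Mv).toNat (by omega)
      refine aux_alg_rel (k := k) hβ hγ hN2 ?_
      linear_combination e1
    have hvall : ∀ t : ℤ, IsAlgebraic k (C.coeff v t) := by
      intro t
      rcases lt_or_ge t Mv with hlt | hle
      · rw [hMvlow t hlt]; exact isAlgebraic_zero
      · have h1 : t = Mv + ((t - Mv).toNat : ℤ) := by omega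
        rw [h1]; exact hvalg _
    have huv : u = u' * v := by
      rw [hvdef, ← mul_assoc, mul_inv_cancel₀ hu'ne, one_mul]
    rw [huv, C.aux_coeff_mul Φ hΦ u' v 0 Mv hu'low hMvlow i]
    refine sum_mem ?_
    intro a' _
    exact mul_mem (hu'sep a') (aux_alg_mem_sep (C.aux_alg_frob Φ hΦ _ (hvall _)))

end Ctx

end SatoTate
end
end

section
/- Let k = F_q and let L be a field extension of k, of characteristic p with q a power of p. Fix an integer h ≥ 1, elements b_0, …, b_h ∈ L with b_h ≠ 0, an element δ ∈ L^sep with δ^{q^h − 1} = 1/b_h, and elements a_0 = 1, a_1, a_2, … of L^sep satisfying, for every i ≥ 1, a_i^{q^h} − a_i = −∑_{0 ≤ j ≤ h−1, i+j−h ≥ 0} δ^{q^j − 1}·b_j·a_{i+j−h}^{q^j}. Fix a discrete valuation ord_v on L. Then there is a constant B ≥ 0 such that ord_v(a_i) ≥ −B for all i ≥ 0 and every valuation ord_v: L^sep → ℚ ∪ {+∞} extending ord_v. -/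
/-!
**Lemma 8.2 of Zywina, "The Sato–Tate Law for Drinfeld Modules".**

Let `k = 𝔽_q`, `L` a field extension of `k` (so of characteristic `p`, with `q = pᵉ`),
and `L^sep` the separable closure of `L`.  Fix `h ≥ 1`, elements `b₀, …, b_h ∈ L` with
`b_h ≠ 0`, an element `δ ∈ L^sep` with `δ^{qʰ−1} = 1/b_h`, and elements
`a₀ = 1, a₁, a₂, …` of `L^sep` satisfying for `i ≥ 1` the recursion
`a_i^{qʰ} − a_i = −∑_{0 ≤ j ≤ h−1, i+j−h ≥ 0} δ^{qʲ−1}·b_j·a_{i+j−h}^{qʲ}`.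
Fix a discrete valuation `ord_v` on `L`.  Then there is a constant `B ≥ 0` with
`ord_v(a_i) ≥ −B` for all `i ≥ 0` and every valuation `ord_v : L^sep → ℚ ∪ {∞}`
extending `ord_v`.
-/

noncomputable section
open scoped Classical

namespace SatoTateLemma82

/-- An additive valuation on a field `K`, with value group inside `Γ ∪ {+∞}`. -/
structure IsVal {K : Type*} [Field K] {Γ : Type*} [AddCommGroup Γ] [LinearOrder Γ] [IsOrderedAddMonoid Γ]
    (v : K → WithTop Γ) : Prop where
  top_iff : ∀ x, v x = ⊤ ↔ x = 0
  map_mul : ∀ x y, v (x * y) = v x + v y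
  min_le : ∀ x y, min (v x) (v y) ≤ v (x + y)

variable {K : Type*} [Field K] {Γ : Type*} [AddCommGroup Γ] [LinearOrder Γ] [IsOrderedAddMonoid Γ]
  {w : K → WithTop Γ}

lemma IsVal.map_zero' (hw : IsVal w) : w 0 = ⊤ := (hw.top_iff 0).mpr rfl

lemma IsVal.ne_top (hw : IsVal w) {x : K} (hx : x ≠ 0) : w x ≠ ⊤ :=
  fun hxx => hx ((hw.top_iff x).mp hxx)

lemma IsVal.exists_coe (hw : IsVal w) {x : K} (hx : x ≠ 0) : ∃ r : Γ, w x = r := by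
  obtain ⟨r, hr⟩ := WithTop.ne_top_iff_exists.mp (hw.ne_top hx)
  exact ⟨r, hr.symm⟩

lemma IsVal.map_one' (hw : IsVal w) : w 1 = 0 := by
  obtain ⟨r, hr⟩ := hw.exists_coe (one_ne_zero : (1:K) ≠ 0)
  have h := hw.map_mul 1 1
  rw [one_mul, hr, ← WithTop.coe_add, WithTop.coe_eq_coe] at h
  rw [hr, left_eq_add.mp h, WithTop.coe_zero]

lemma IsVal.map_neg' (hw : IsVal w) (x : K) : w (-x) = w x := by
  obtain ⟨r, hr⟩ := hw.exists_coe (neg_ne_zero.mpr (one_ne_zero : (1:K) ≠ 0))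
  have h := hw.map_mul (-1) (-1)
  rw [neg_mul_neg, one_mul, hw.map_one', hr, ← WithTop.coe_add, ← WithTop.coe_zero,
    WithTop.coe_eq_coe] at h
  have hr0 : r = 0 := by
    rcases lt_trichotomy r 0 with hlt | h0 | hgt
    · exact absurd h.symm (by simpa using (add_lt_add hlt hlt).ne)
    · exact h0
    · exact absurd h.symm (add_pos hgt hgt).ne'
  have : w (-x) = w (-1) + w x := by rw [← hw.map_mul]; ring_nf
  rw [this, hr, hr0, WithTop.coe_zero, zero_add]

lemma IsVal.map_pow' (hw : IsVal w) {x : K} {r : Γ} (hx : w x = r) (n : ℕ) :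
    w (x ^ n) = ((n • r : Γ) : WithTop Γ) := by
  induction n with
  | zero => simp [hw.map_one']
  | succ n ih =>
      rw [pow_succ, hw.map_mul, ih, hx, ← WithTop.coe_add, succ_nsmul]

lemma IsVal.map_inv' (hw : IsVal w) {x : K} {r : Γ} (hx0 : x ≠ 0) (hx : w x = r) :
    w x⁻¹ = ((-r : Γ) : WithTop Γ) := by
  obtain ⟨s, hs⟩ := hw.exists_coe (inv_ne_zero hx0)
  have h := hw.map_mul x x⁻¹
  rw [mul_inv_cancel₀ hx0, hw.map_one', hx, hs, ← WithTop.coe_add, ← WithTop.coe_zero,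
    WithTop.coe_eq_coe] at h
  rw [hs, WithTop.coe_eq_coe]
  exact (neg_eq_of_add_eq_zero_right h.symm).symm

lemma IsVal.add_eq_left' (hw : IsVal w) {x y : K} (hxy : w x < w y) : w (x + y) = w x := by
  refine le_antisymm ?_ ?_
  · have h := hw.min_le (x + y) (-y)
    rw [add_neg_cancel_right, hw.map_neg'] at h
    rcases min_le_iff.mp h with h1 | h1
    · exact h1
    · exact absurd h1 (not_le.mpr hxy)
  · have h := hw.min_le x y
    rwa [min_eq_left hxy.le] at h

lemma IsVal.le_sum' (hw : IsVal w) {ι : Type*} (s : Finset ι) (f : ι → K) (c : WithTop Γ)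
    (hc : ∀ j ∈ s, c ≤ w (f j)) : c ≤ w (∑ j ∈ s, f j) := by
  induction s using Finset.cons_induction with
  | empty => simp [hw.map_zero']
  | cons a s ha ih =>
      rw [Finset.sum_cons]
      refine le_trans ?_ (hw.min_le _ _)
      exact le_min (hc a (Finset.mem_cons_self a s)) (ih fun j hj => hc j (Finset.mem_cons_of_mem hj))

theorem valuations_of_coefficients_bounded_below
    (p : ℕ) [Fact p.Prime] (e : ℕ) (he : 0 < e) (q : ℕ) (hq : q = p ^ e)
    (L Lsep : Type) [Field L] [CharP L p] [Field Lsep] [Algebra L Lsep]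
    [Algebra.IsAlgebraic L Lsep] [Algebra.IsSeparable L Lsep]
    -- a discrete (`ℤ`-valued) valuation on `L`
    (v : L → WithTop ℤ) (hv : IsVal v)
    (h : ℕ) (hh : 1 ≤ h)
    (b : ℕ → L) (hbh : b h ≠ 0)
    (δ : Lsep) (hδ : δ ^ (q ^ h - 1) = (algebraMap L Lsep (b h))⁻¹)
    (a : ℕ → Lsep) (ha0 : a 0 = 1)
    (harec : ∀ i : ℕ, 1 ≤ i →
      a i ^ q ^ h - a i =
        -∑ j ∈ Finset.range h, if h ≤ i + j then
            δ ^ (q ^ j - 1) * algebraMap L Lsep (b j) * a (i + j - h) ^ q ^ j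
          else 0) :
    ∃ B : ℚ, 0 ≤ B ∧
      ∀ w : Lsep → WithTop ℚ, IsVal w →
        (∀ x : L, w (algebraMap L Lsep x) = (v x).map (fun z : ℤ => (z : ℚ))) →
        ∀ i : ℕ, ((-B : ℚ) : WithTop ℚ) ≤ w (a i) := by
  have hq2 : 2 ≤ q := by
    have hp := (Fact.out : p.Prime).two_le
    calc 2 ≤ p := hp
    _ ≤ p ^ e := Nat.le_self_pow he.ne' p
    _ = q := hq.symm
  have hqQ : (2:ℚ) ≤ (q:ℚ) := by exact_mod_cast hq2
  have hqh1 : 1 ≤ q ^ h := Nat.one_le_pow _ _ (by omega)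
  have hqh2 : 2 ≤ q ^ h := by
    calc 2 ≤ q := hq2
    _ = q ^ 1 := (pow_one q).symm
    _ ≤ q ^ h := Nat.pow_le_pow_right (by omega) hh
  have hqh2Q : (2:ℚ) ≤ (q:ℚ)^h := by exact_mod_cast hqh2
  obtain ⟨mh, hmh⟩ := hv.exists_coe hbh
  set d : ℚ := -(mh : ℚ) / ((q:ℚ)^h - 1) with hd
  set c : ℕ → ℚ := fun j => ((q:ℚ)^j - 1) * d + ((WithTop.untopD 0 (v (b j)) : ℤ) : ℚ) with hc
  have hne : (Finset.range h).Nonempty := ⟨0, Finset.mem_range.mpr hh⟩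
  set C : ℚ := (Finset.range h).inf' hne c with hC
  set B : ℚ := max 0 (-C) with hB
  have hB0 : 0 ≤ B := le_max_left _ _
  have hpow : (q:ℚ)^h = (q:ℚ) * (q:ℚ)^(h-1) := by
    conv_lhs => rw [← Nat.sub_add_cancel hh]
    rw [pow_succ]; ring
  have hq1 : (1:ℚ) ≤ (q:ℚ)^(h-1) := one_le_pow₀ (by linarith)
  have hqh1Q : (1:ℚ) ≤ (q:ℚ)^h - (q:ℚ)^(h-1) := by nlinarith
  have hkey : (q:ℚ)^h * (-B) ≤ C - (q:ℚ)^(h-1) * B := by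
    rcases le_or_gt 0 C with h0 | h0
    · have hBe : B = 0 := by rw [hB]; simp [neg_nonpos.mpr h0]
      rw [hBe]; nlinarith
    · have hBe : B = -C := by rw [hB, max_eq_right (by linarith)]
      rw [hBe]; nlinarith
  refine ⟨B, hB0, ?_⟩
  intro w hw hwext
  have hbhL : algebraMap L Lsep (b h) ≠ 0 := fun hx => hbh (by simpa using hx)
  have hδ0 : δ ≠ 0 := by
    intro h0
    rw [h0, zero_pow (by omega : q ^ h - 1 ≠ 0)] at hδ
    exact hbhL (inv_eq_zero.mp hδ.symm)
  have hwbh : w (algebraMap L Lsep (b h)) = ((mh : ℚ) : WithTop ℚ) := by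
    rw [hwext, hmh]; rfl
  obtain ⟨dw, hdw⟩ := hw.exists_coe hδ0
  have hdwd : dw = d := by
    have h1 : w (δ ^ (q ^ h - 1)) = (((q ^ h - 1) • dw : ℚ) : WithTop ℚ) := hw.map_pow' hdw _
    rw [hδ, hw.map_inv' hbhL hwbh, WithTop.coe_eq_coe, nsmul_eq_mul,
      Nat.cast_sub hqh1] at h1
    push_cast at h1
    rw [hd]
    have hne1 : (q:ℚ)^h - 1 ≠ 0 := by linarith
    field_simp
    linarith [h1]
  rw [hdwd] at hdw
  intro i
  induction i using Nat.strong_induction_on with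
  | _ i IH =>
  rcases Nat.eq_zero_or_pos i with rfl | hi
  · rw [ha0, hw.map_one', ← WithTop.coe_zero, WithTop.coe_le_coe]; linarith
  by_cases hai : a i = 0
  · rw [(hw.top_iff _).mpr hai]; exact le_top
  obtain ⟨r, hr⟩ := hw.exists_coe hai
  have hT : ((C - (q:ℚ)^(h-1) * B : ℚ) : WithTop ℚ) ≤ w (a i ^ q ^ h - a i) := by
    rw [harec i hi, hw.map_neg']
    refine hw.le_sum' _ _ _ ?_
    intro j hj
    rw [Finset.mem_range] at hj
    by_cases hij : h ≤ i + j
    · rw [if_pos hij]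
      by_cases hbj : b j = 0
      · rw [hbj, map_zero, mul_zero, zero_mul, hw.map_zero']; exact le_top
      by_cases haj : a (i + j - h) = 0
      · rw [haj, zero_pow (pow_ne_zero j (by omega : q ≠ 0)), mul_zero, hw.map_zero']
        exact le_top
      obtain ⟨mj, hmj⟩ := hv.exists_coe hbj
      have hwbj : w (algebraMap L Lsep (b j)) = ((mj : ℚ) : WithTop ℚ) := by
        rw [hwext, hmj]; rfl
      obtain ⟨s, hs⟩ := hw.exists_coe haj
      have hBs : -B ≤ s := by
        have hih := IH (i + j - h) (by omega)
        rwa [hs, WithTop.coe_le_coe] at hih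
      rw [hw.map_mul, hw.map_mul, hw.map_pow' hdw, hwbj, hw.map_pow' hs,
        ← WithTop.coe_add, ← WithTop.coe_add, WithTop.coe_le_coe]
      have hcj : C ≤ c j := Finset.inf'_le _ (Finset.mem_range.mpr hj)
      have hcval : c j = ((q:ℚ)^j - 1) * d + (mj : ℚ) := by
        simp only [hc]; rw [hmj]; simp
      have hqj : (q:ℚ)^j ≤ (q:ℚ)^(h-1) := pow_le_pow_right₀ (by linarith) (by omega)
      have hsm1 : ((q ^ j - 1) • d : ℚ) = ((q:ℚ)^j - 1) * d := by
        rw [nsmul_eq_mul, Nat.cast_sub (Nat.one_le_pow _ _ (by omega))]; push_cast; ring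
      have hsm2 : ((q ^ j) • s : ℚ) = (q:ℚ)^j * s := by rw [nsmul_eq_mul]; push_cast; ring
      rw [hsm1, hsm2]
      have hqjpos : (0:ℚ) < (q:ℚ)^j := pow_pos (by linarith) _
      rw [hcval] at hcj
      nlinarith [mul_le_mul_of_nonneg_left hBs hqjpos.le,
        mul_le_mul_of_nonneg_right hqj hB0]
    · rw [if_neg hij, hw.map_zero']; exact le_top
  have hrneg : r < 0 ∨ 0 ≤ r := by rcases lt_or_ge r 0 with h0 | h0 <;> [exact Or.inl h0; exact Or.inr h0]
  rw [hr, WithTop.coe_le_coe]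
  rcases hrneg with h0 | h0
  swap
  · linarith
  have hlhs : w (a i ^ q ^ h - a i) = (((q ^ h) • r : ℚ) : WithTop ℚ) := by
    rw [sub_eq_add_neg, hw.add_eq_left' (by
      rw [hw.map_pow' hr, hw.map_neg', hr, WithTop.coe_lt_coe, nsmul_eq_mul]
      have hcast : (2:ℚ) ≤ ((q ^ h : ℕ) : ℚ) := by exact_mod_cast hqh2
      nlinarith)]
    exact hw.map_pow' hr _
  rw [hlhs, WithTop.coe_le_coe, nsmul_eq_mul] at hT
  push_cast at hT
  have hqhpos : (0:ℚ) < (q:ℚ)^h := by linarith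
  nlinarith [hkey, hT, hqhpos]

end SatoTateLemma82
end
end
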